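/- arXiv:2605.06956 — 4 statements merged into one kernel-verified Lean document; each statement's English description precedes it below -/
import Mathlib

section
/- Let F = y^m z^{n-m} - x^n with n > m > 1 and char(k) ∤ n·m·(n-m), k algebraically closed. Then the total Tjurina number τ(F) = (n-1)(n-2). -/
open MvPolynomial

/-- The multiplicative set of polynomials in `k[u,v]` not vanishing at `(a,b)`; the complement
of the maximal ideal `⟨u-a, v-b⟩`. -/
def ptCompl {k : Type} [Field k] (a b : k) : Submonoid (MvPolynomial (Fin 2) k) where
  carrier := {g | eval ![a, b] g ≠ 0}
  mul_mem' := by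
    intro g h hg hh
    simp only [Set.mem_setOf_eq, map_mul] at *
    exact mul_ne_zero hg hh
  one_mem' := by simp

/-- `dim_k (k[u,v]/J)_{⟨u-a, v-b⟩}`. -/
noncomputable def localDim {k : Type} [Field k] (J : Ideal (MvPolynomial (Fin 2) k)) (a b : k) : ℕ :=
  Module.finrank k
    (Localization (ptCompl a b) ⧸ J.map (algebraMap (MvPolynomial (Fin 2) k) (Localization (ptCompl a b))))

/-- The Tjurina ideal `⟨g, g_{X0}, g_{X1}⟩` of an affine plane curve `g ∈ k[u,v]`. -/
noncomputable def tjurinaIdeal {k : Type} [Field k] (g : MvPolynomial (Fin 2) k) :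
    Ideal (MvPolynomial (Fin 2) k) :=
  Ideal.span {g, pderiv 0 g, pderiv 1 g}


variable {k : Type} [Field k]

lemma monomial_one_eq (d : Fin 2 →₀ ℕ) :
    (monomial d (1:k)) = X 0 ^ (d 0) * X 1 ^ (d 1) := by
  have h : (Finsupp.single (0:Fin 2) (d 0) + Finsupp.single 1 (d 1)) = d := by
    ext i; fin_cases i <;> simp
  rw [X_pow_eq_monomial, X_pow_eq_monomial, monomial_mul, one_mul, h]

def Iab (k : Type) [Field k] (a b : ℕ) : Ideal (MvPolynomial (Fin 2) k) where
  carrier := {f | ∀ d ∈ f.support, a ≤ d 0 ∨ b ≤ d 1}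
  zero_mem' := by simp
  add_mem' := by
    intro f g hf hg d hd
    have := Finsupp.support_add hd
    rcases Finset.mem_union.1 this with h | h
    · exact hf d h
    · exact hg d h
  smul_mem' := by
    intro c f hf d hd
    have := MvPolynomial.support_mul c f hd
    rcases Finset.mem_add.1 this with ⟨d1, h1, d2, h2, rfl⟩
    rcases hf d2 h2 with h | h
    · exact Or.inl (le_trans h (by simp))
    · exact Or.inr (le_trans h (by simp))

lemma monomial_mem_span {a b : ℕ} {d : Fin 2 →₀ ℕ} (h : a ≤ d 0 ∨ b ≤ d 1) (c : k) :
    monomial d c ∈ Ideal.span {(X 0 : MvPolynomial (Fin 2) k) ^ a, X 1 ^ b} := by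
  rcases h with h | h
  · have he : monomial d c = (X 0 : MvPolynomial (Fin 2) k) ^ a *
        monomial (d - Finsupp.single 0 a) c := by
      have h2 : Finsupp.single (0:Fin 2) a + (d - Finsupp.single 0 a) = d := by
        ext i; fin_cases i <;> simp [Finsupp.single_apply] <;> omega
      rw [X_pow_eq_monomial, monomial_mul, one_mul, h2]
    rw [he]
    exact Ideal.mul_mem_right _ _ (Ideal.subset_span (by simp))
  · have he : monomial d c = (X 1 : MvPolynomial (Fin 2) k) ^ b *
        monomial (d - Finsupp.single 1 b) c := by
      have h2 : Finsupp.single (1:Fin 2) b + (d - Finsupp.single 1 b) = d := by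
        ext i; fin_cases i <;> simp [Finsupp.single_apply] <;> omega
      rw [X_pow_eq_monomial, monomial_mul, one_mul, h2]
    rw [he]
    exact Ideal.mul_mem_right _ _ (Ideal.subset_span (by simp))

lemma span_eq_Iab (a b : ℕ) :
    Ideal.span {(X 0 : MvPolynomial (Fin 2) k) ^ a, X 1 ^ b} = Iab k a b := by
  classical
  apply le_antisymm
  · rw [Ideal.span_le]
    rintro f hf
    rcases hf with rfl | rfl
    · intro d hd
      rw [X_pow_eq_monomial, support_monomial] at hd
      simp at hd
      subst hd; simp
    · intro d hd
      rw [X_pow_eq_monomial, support_monomial] at hd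
      simp at hd
      subst hd; simp
  · intro f hf
    rw [f.as_sum]
    exact Ideal.sum_mem _ fun d hd => monomial_mem_span (hf d hd) _

noncomputable abbrev dmap (a b : ℕ) (p : Fin a × Fin b) : Fin 2 →₀ ℕ :=
  Finsupp.single 0 p.1.val + Finsupp.single 1 p.2.val

lemma dmap_apply0 {a b : ℕ} (p : Fin a × Fin b) : dmap a b p 0 = p.1.val := by simp
lemma dmap_apply1 {a b : ℕ} (p : Fin a × Fin b) : dmap a b p 1 = p.2.val := by simp

lemma dmap_inj (a b : ℕ) : Function.Injective (dmap a b) := by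
  intro p q h
  have h0 := congrArg (fun d => d 0) h
  have h1 := congrArg (fun d => d 1) h
  simp only [dmap_apply0, dmap_apply1] at h0 h1
  ext
  · exact h0
  · exact h1

lemma finrank_quot (a b : ℕ) :
    Module.finrank k
      (MvPolynomial (Fin 2) k ⧸ Ideal.span {(X 0 : MvPolynomial (Fin 2) k) ^ a, X 1 ^ b})
      = a * b := by
  classical
  set J := Ideal.span {(X 0 : MvPolynomial (Fin 2) k) ^ a, X 1 ^ b} with hJ
  set v : Fin a × Fin b → MvPolynomial (Fin 2) k ⧸ J :=
    fun p => Ideal.Quotient.mkₐ k J (monomial (dmap a b p) 1) with hv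
  have hindep : LinearIndependent k v := by
    rw [Fintype.linearIndependent_iff]
    intro g hg p
    set f : MvPolynomial (Fin 2) k := ∑ q, monomial (dmap a b q) (g q) with hf
    have hmk : Ideal.Quotient.mkₐ k J f = 0 := by
      rw [hf, map_sum, ← hg]
      congr 1
      ext q
      rw [show (monomial (dmap a b q)) (g q) = g q • (monomial (dmap a b q)) (1:k) by
        rw [smul_monomial, smul_eq_mul, mul_one], map_smul]
    have hfJ : f ∈ J := by
      rwa [show (Ideal.Quotient.mkₐ k J f = 0) = (Ideal.Quotient.mk J f = 0) from rfl,
        Ideal.Quotient.eq_zero_iff_mem] at hmk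
    rw [hJ, span_eq_Iab] at hfJ
    have hco : coeff (dmap a b p) f = g p := by
      rw [hf, coeff_sum]
      have : ∀ q : Fin a × Fin b,
          coeff (dmap a b p) (monomial (dmap a b q) (g q)) = if q = p then g q else 0 := by
        intro q
        rw [coeff_monomial]
        simp [ (dmap_inj a b).eq_iff ]
      simp_rw [this]
      simp
    by_contra hgp
    have hmem : dmap a b p ∈ f.support := by
      rw [mem_support_iff, hco]; exact hgp
    have := hfJ _ hmem
    rw [dmap_apply0, dmap_apply1] at this
    rcases this with h | h
    · exact absurd h (by exact Nat.not_le.2 p.1.isLt)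
    · exact absurd h (by exact Nat.not_le.2 p.2.isLt)
  have hspan : ⊤ ≤ Submodule.span k (Set.range v) := by
    rintro x -
    obtain ⟨f, rfl⟩ := Ideal.Quotient.mkₐ_surjective k J x
    rw [f.as_sum, map_sum]
    apply Submodule.sum_mem
    intro d hd
    by_cases hcase : a ≤ d 0 ∨ b ≤ d 1
    · have : Ideal.Quotient.mkₐ k J (monomial d (coeff d f)) = 0 := by
        rw [show (Ideal.Quotient.mkₐ k J) (monomial d (coeff d f)) =
          Ideal.Quotient.mk J (monomial d (coeff d f)) from rfl,
          Ideal.Quotient.eq_zero_iff_mem, hJ]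
        exact monomial_mem_span hcase _
      rw [this]
      exact Submodule.zero_mem _
    · push_neg at hcase
      have hd0 : d 0 < a := hcase.1
      have hd1 : d 1 < b := hcase.2
      have hdm : dmap a b (⟨d 0, hd0⟩, ⟨d 1, hd1⟩) = d := by
        ext i; fin_cases i <;> simp
      have : monomial d (coeff d f) = coeff d f • monomial (dmap a b (⟨d 0, hd0⟩, ⟨d 1, hd1⟩)) 1 := by
        rw [hdm, smul_monomial, smul_eq_mul, mul_one]
      rw [this, map_smul]
      exact Submodule.smul_mem _ _ (Submodule.subset_span ⟨_, rfl⟩)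
  let B : Module.Basis (Fin a × Fin b) k (MvPolynomial (Fin 2) k ⧸ J) := Module.Basis.mk hindep hspan
  rw [Module.finrank_eq_card_basis B]
  simp

set_option maxHeartbeats 1000000 in
lemma localDim_eq_finrank (J : Ideal (MvPolynomial (Fin 2) k))
    (h : ∀ s ∈ ptCompl (0:k) 0, IsUnit (Ideal.Quotient.mk J s)) :
    localDim J 0 0 = Module.finrank k (MvPolynomial (Fin 2) k ⧸ J) := by
  classical
  set R := MvPolynomial (Fin 2) k
  set S := ptCompl (0:k) 0
  set L := Localization S
  set alg := algebraMap R L with halg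
  set Je := J.map alg with hJe
  have hle : J ≤ Je.comap alg := fun x hx => Ideal.mem_map_of_mem _ hx
  set φ₀ : (R ⧸ J) →+* (L ⧸ Je) := Ideal.quotientMap Je alg hle with hphi
  have hcomm : ∀ c : k, φ₀ (algebraMap k (R ⧸ J) c) = (algebraMap k (L ⧸ Je) : k →+* L ⧸ Je) c := by
    intro c
    have h1 : algebraMap k (R ⧸ J) c = Ideal.Quotient.mk J (algebraMap k R c) := rfl
    have h2 : (algebraMap k (L ⧸ Je) : k →+* L ⧸ Je) c = Ideal.Quotient.mk Je (algebraMap k L c) := rfl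
    rw [h1, h2, hphi, Ideal.quotientMap_mk]
    congr 1
  set φ : (R ⧸ J) →ₐ[k] (L ⧸ Je) := ⟨φ₀, hcomm⟩ with hphi2
  have hinj : Function.Injective φ := by
    rw [injective_iff_map_eq_zero]
    intro x hx
    obtain ⟨r, rfl⟩ := Ideal.Quotient.mk_surjective x
    have : alg r ∈ Je := by
      rw [← Ideal.Quotient.eq_zero_iff_mem]
      simpa [hphi2, hphi, Ideal.quotientMap_mk] using hx
    rw [hJe, IsLocalization.mem_map_algebraMap_iff S L] at this
    obtain ⟨⟨a, s⟩, ha⟩ := this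
    rw [← map_mul, IsLocalization.eq_iff_exists S L] at ha
    obtain ⟨c, hc⟩ := ha
    have hmem : r * (s * c) ∈ J := by
      have h2 : r * ((s:R) * c) = (a:R) * c := by linear_combination hc
      rw [h2]
      exact J.mul_mem_right _ a.2
    have hu : IsUnit (Ideal.Quotient.mk J ((s : R) * c)) := h _ (mul_mem s.2 c.2)
    have : Ideal.Quotient.mk J r * Ideal.Quotient.mk J ((s:R) * c) = 0 := by
      rw [← map_mul, Ideal.Quotient.eq_zero_iff_mem]
      exact hmem
    exact (hu.mul_left_eq_zero).mp this
  have hsurj : Function.Surjective φ := by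
    intro y
    obtain ⟨z, rfl⟩ := Ideal.Quotient.mk_surjective y
    obtain ⟨⟨r, s⟩, rfl⟩ := IsLocalization.mk'_surjective S z
    obtain ⟨t, ht⟩ := (h s s.2).exists_right_inv
    obtain ⟨t', rfl⟩ := Ideal.Quotient.mk_surjective t
    refine ⟨Ideal.Quotient.mk J (r * t'), ?_⟩
    have hst : (s : R) * t' - 1 ∈ J := by
      rw [← Ideal.Quotient.eq_zero_iff_mem, map_sub, map_mul, ht]
      simp
    have key : alg (r * t') - IsLocalization.mk' L r s ∈ Je := by
      have hspec : IsLocalization.mk' L r s * alg s = alg r := IsLocalization.mk'_spec L r s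
      have : alg (r * t') - IsLocalization.mk' L r s
          = IsLocalization.mk' L r s * alg ((s : R) * t' - 1) := by
        simp only [map_sub, map_mul, map_one]
        linear_combination (-(alg t')) * hspec
      rw [this]
      exact Ideal.mul_mem_left _ _ (Ideal.mem_map_of_mem _ hst)
    show φ₀ _ = _
    rw [hphi, Ideal.quotientMap_mk, Ideal.Quotient.eq]
    exact key
  have e : (R ⧸ J) ≃ₗ[k] (L ⧸ Je) := (AlgEquiv.ofBijective φ ⟨hinj, hsurj⟩).toLinearEquiv
  rw [localDim]
  exact (e.finrank_eq).symm

lemma support_pow_le (p : MvPolynomial (Fin 2) k) (hp : constantCoeff p = 0) (N : ℕ) :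
    ∀ d ∈ (p ^ N).support, N ≤ d 0 + d 1 := by
  classical
  induction N with
  | zero =>
    intro d hd
    exact Nat.zero_le _
  | succ N ih =>
    intro d hd
    rw [pow_succ] at hd
    rcases Finset.mem_add.1 (MvPolynomial.support_mul _ _ hd) with ⟨d1, h1, d2, h2, rfl⟩
    have hd2 : d2 ≠ 0 := by
      intro h0
      rw [mem_support_iff, h0] at h2
      exact h2 hp
    have hd2' : 1 ≤ d2 0 + d2 1 := by
      by_contra hc
      push_neg at hc
      apply hd2
      ext i
      fin_cases i <;> simp <;> omega
    have := ih d1 h1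
    simp only [Finsupp.add_apply]
    omega

lemma isUnit_mk_span (a b : ℕ) (s : MvPolynomial (Fin 2) k) (hs : s ∈ ptCompl (0:k) 0) :
    IsUnit (Ideal.Quotient.mk
      (Ideal.span {(X 0 : MvPolynomial (Fin 2) k) ^ a, X 1 ^ b}) s) := by
  set J := Ideal.span {(X 0 : MvPolynomial (Fin 2) k) ^ a, X 1 ^ b} with hJ
  set c := constantCoeff s with hc
  have hc0 : c ≠ 0 := by
    have : eval ![(0:k), 0] s = constantCoeff s := by
      have h0 : ![(0:k), 0] = 0 := by funext i; fin_cases i <;> rfl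
      rw [h0, eval_zero]
    rw [hc, ← this]
    exact hs
  have hCunit : IsUnit (Ideal.Quotient.mk J (C c)) := by
    apply IsUnit.of_mul_eq_one (Ideal.Quotient.mk J (C c⁻¹))
    rw [← map_mul, ← C_mul, mul_inv_cancel₀ hc0, C_1, map_one]
  have hnil : IsNilpotent (Ideal.Quotient.mk J (s - C c)) := by
    refine ⟨a + b, ?_⟩
    rw [← map_pow, Ideal.Quotient.eq_zero_iff_mem, hJ, span_eq_Iab]
    intro d hd
    have h0 : constantCoeff (s - C c) = 0 := by simp [hc]
    have := support_pow_le _ h0 (a + b) d hd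
    omega
  have : Ideal.Quotient.mk J s
      = Ideal.Quotient.mk J (C c) + Ideal.Quotient.mk J (s - C c) := by
    rw [← map_add]
    ring_nf
  rw [this]
  exact IsNilpotent.isUnit_add_left_of_commute hnil hCunit (Commute.all _ _)

lemma tjurina_span (p q : ℕ) (hp : 2 ≤ p) (hq : 1 ≤ q) (hp0 : (p:k) ≠ 0) (hq0 : (q:k) ≠ 0) :
    tjurinaIdeal ((X 1 : MvPolynomial (Fin 2) k) ^ q - X 0 ^ p)
      = Ideal.span {(X 0 : MvPolynomial (Fin 2) k) ^ (p-1), X 1 ^ (q-1)} := by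
  set g : MvPolynomial (Fin 2) k := X 1 ^ q - X 0 ^ p with hg
  have hd0 : pderiv 0 g = -((p : MvPolynomial (Fin 2) k) * X 0 ^ (p - 1)) := by
    rw [hg, map_sub, pderiv_pow, pderiv_pow, pderiv_X_self,
      pderiv_X_of_ne (by decide : (1:Fin 2) ≠ 0)]
    ring
  have hd1 : pderiv 1 g = (q : MvPolynomial (Fin 2) k) * X 1 ^ (q - 1) := by
    rw [hg, map_sub, pderiv_pow, pderiv_pow, pderiv_X_self,
      pderiv_X_of_ne (by decide : (0:Fin 2) ≠ 1)]
    ring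
  have hcastp : (p : MvPolynomial (Fin 2) k) = C (p : k) := (C_eq_coe_nat p).symm
  have hcastq : (q : MvPolynomial (Fin 2) k) = C (q : k) := (C_eq_coe_nat q).symm
  apply le_antisymm
  · rw [tjurinaIdeal, Ideal.span_le]
    rintro f hf
    simp only [Set.mem_insert_iff, Set.mem_singleton_iff] at hf
    rcases hf with rfl | rfl | rfl
    · rw [SetLike.mem_coe, Ideal.mem_span_pair]
      refine ⟨-(X 0 ^ (p - (p-1))), X 1 ^ (q - (q-1)), ?_⟩
      have e1 : (X 1 : MvPolynomial (Fin 2) k) ^ (q - (q-1)) * X 1 ^ (q-1) = X 1 ^ q := by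
        rw [← pow_add]; congr 1; omega
      have e2 : (X 0 : MvPolynomial (Fin 2) k) ^ (p - (p-1)) * X 0 ^ (p-1) = X 0 ^ p := by
        rw [← pow_add]; congr 1; omega
      rw [hg, neg_mul, e2, e1]
      ring
    · rw [SetLike.mem_coe, Ideal.mem_span_pair]
      exact ⟨-(p : MvPolynomial (Fin 2) k), 0, by rw [hd0]; ring⟩
    · rw [SetLike.mem_coe, Ideal.mem_span_pair]
      exact ⟨0, (q : MvPolynomial (Fin 2) k), by rw [hd1]; ring⟩
  · rw [Ideal.span_le]
    rintro f hf
    simp only [Set.mem_insert_iff, Set.mem_singleton_iff] at hf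
    have hmem0 : pderiv 0 g ∈ tjurinaIdeal g :=
      Ideal.subset_span (by simp [Set.mem_insert_iff])
    have hmem1 : pderiv 1 g ∈ tjurinaIdeal g :=
      Ideal.subset_span (by simp [Set.mem_insert_iff])
    rcases hf with rfl | rfl
    · have : (X 0 : MvPolynomial (Fin 2) k) ^ (p-1) = (-(C (p:k)⁻¹)) * pderiv 0 g := by
        rw [hd0, hcastp, neg_mul_neg, ← mul_assoc, ← C_mul, inv_mul_cancel₀ hp0, C_1, one_mul]
      rw [this]
      exact Ideal.mul_mem_left _ _ hmem0
    · have : (X 1 : MvPolynomial (Fin 2) k) ^ (q-1) = C (q:k)⁻¹ * pderiv 1 g := by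
        rw [hd1, hcastq, ← mul_assoc, ← C_mul, inv_mul_cancel₀ hq0, C_1, one_mul]
      rw [this]
      exact Ideal.mul_mem_left _ _ hmem1

/-- Let `F = yᵐ z^{n-m} - xⁿ` with `n > m > 1`, over an algebraically closed
field `k` with `char k ∤ n·m·(n-m)`.  The singular points of `F` are `(0:0:1)` (in the chart
`z = 1`, where the dehomogenization is `g = yᵐ - xⁿ`) and, when `n - m > 1`, `(0:1:0)` (in the
chart `y = 1`, where the dehomogenization is `f = z^{n-m} - xⁿ`); the total Tjurina number is
the sum of the local Tjurina numbers at these points, and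
`τ(F) = (n-1)(m-1) + (n-1)(n-m-1) = (n-1)(n-2)`. -/
theorem statement_10 {k : Type} [Field k] [IsAlgClosed k] (n m : ℕ)
    (hm : 1 < m) (hmn : m < n)
    (hn0 : (n : k) ≠ 0) (hm0 : (m : k) ≠ 0) (hnm0 : ((n - m : ℕ) : k) ≠ 0) :
    localDim (tjurinaIdeal ((X 1 : MvPolynomial (Fin 2) k) ^ m - X 0 ^ n)) 0 0 +
      localDim (tjurinaIdeal ((X 1 : MvPolynomial (Fin 2) k) ^ (n - m) - X 0 ^ n)) 0 0 =
      (n - 1) * (n - 2) := by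
  have h1 : localDim (tjurinaIdeal ((X 1 : MvPolynomial (Fin 2) k) ^ m - X 0 ^ n)) 0 0
      = (n - 1) * (m - 1) := by
    rw [tjurina_span n m (by omega) (by omega) hn0 hm0,
      localDim_eq_finrank _ (fun s hs => isUnit_mk_span _ _ s hs), finrank_quot]
  have h2 : localDim (tjurinaIdeal ((X 1 : MvPolynomial (Fin 2) k) ^ (n - m) - X 0 ^ n)) 0 0
      = (n - 1) * (n - m - 1) := by
    rw [tjurina_span n (n - m) (by omega) (by omega) hn0 hnm0,
      localDim_eq_finrank _ (fun s hs => isUnit_mk_span _ _ s hs), finrank_quot]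
  rw [h1, h2, ← Nat.left_distrib]
  congr 1
  omega
end

section
/- Let I = ⟨2z², yz, 2xz + 3y²⟩ ⊆ k[x,y,z] with char(k) ≠ 2, 3. Then the projective zero set V(I) = {(1:0:0)}, and dim_k (k[y,z]/⟨z², yz, 2z + 3y²⟩)_{⟨y,z⟩} = 3. Consequently deg(R/I) = 3. -/
open MvPolynomial

/-- The degree-`n` homogeneous component of `k[x,y,z]/I`. -/
noncomputable def gradedPiece {k : Type} [Field k] (I : Ideal (MvPolynomial (Fin 3) k)) (n : ℕ) :
    Submodule k (MvPolynomial (Fin 3) k ⧸ I) :=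
  (homogeneousSubmodule (Fin 3) k n).map (Ideal.Quotient.mkₐ k I).toLinearMap

namespace Statement13Aux

open Polynomial in
lemma root_pow_three {k : Type} [Field k] :
    (AdjoinRoot.root (Polynomial.X ^ 3 : k[X])) ^ 3 = 0 := by
  rw [← AdjoinRoot.mk_X, ← map_pow, AdjoinRoot.mk_self]

lemma mem_span_triple {R : Type*} [CommRing R] {a b c x : R} (p q r : R)
    (h : x = p * a + q * b + r * c) : x ∈ Ideal.span {a, b, c} := by
  subst h
  refine add_mem (add_mem ?_ ?_) ?_ <;>
    exact Ideal.mul_mem_left _ _ (Ideal.subset_span (by simp))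

variable {k : Type} [Field k]

/-- The dehomogenized ideal in the chart `x = 1`. -/
noncomputable def J2 (k : Type) [Field k] : Ideal (MvPolynomial (Fin 2) k) :=
  Ideal.span {(X 1 : MvPolynomial (Fin 2) k) ^ 2, X 0 * X 1,
    2 * X 1 + 3 * (X 0 : MvPolynomial (Fin 2) k) ^ 2}

lemma X0_cube_mem (h3 : (3 : k) ≠ 0) : (X 0 : MvPolynomial (Fin 2) k) ^ 3 ∈ J2 k := by
  have h1 : (3 : MvPolynomial (Fin 2) k) * X 0 ^ 3 ∈ J2 k :=
    mem_span_triple 0 (-2) (X 0) (by ring)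
  have hC3 : (C (3 : k) : MvPolynomial (Fin 2) k) = 3 := map_ofNat C 3
  have key : (C ((3 : k)⁻¹) : MvPolynomial (Fin 2) k) * ((3 : MvPolynomial (Fin 2) k) * X 0 ^ 3)
      = X 0 ^ 3 := by
    rw [← hC3, ← mul_assoc, ← map_mul, inv_mul_cancel₀ h3, map_one, one_mul]
  exact key ▸ Ideal.mul_mem_left _ _ h1

lemma isUnit_mk_of_eval_ne (h3 : (3 : k) ≠ 0) {s : MvPolynomial (Fin 2) k}
    (hs : eval ![0, 0] s ≠ 0) : IsUnit (Ideal.Quotient.mk (J2 k) s) := by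
  have hzero : (![0, 0] : Fin 2 → k) = 0 := by funext i; fin_cases i <;> rfl
  rw [hzero, eval_zero] at hs
  set c := constantCoeff s with hc
  have hsc : s - C c ∈ Ideal.span {(X 0 : MvPolynomial (Fin 2) k), X 1} := by
    have himg : ({(X 0 : MvPolynomial (Fin 2) k), X 1} : Set (MvPolynomial (Fin 2) k))
        = X '' Set.univ := by
      rw [Set.image_univ]
      ext p
      simp [Fin.exists_fin_two, eq_comm]
    rw [himg, mem_ideal_span_X_image]
    intro m hm
    by_contra hcon
    push_neg at hcon
    have hm0 : m = 0 := Finsupp.ext fun i => hcon i (Set.mem_univ i)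
    rw [mem_support_iff, hm0] at hm
    apply hm
    simp [coeff_sub, coeff_zero_C, hc, constantCoeff_eq]
  obtain ⟨a, b, hab⟩ := Ideal.mem_span_pair.mp hsc
  have hcube : (s - C c) ^ 3 ∈ J2 k := by
    rw [← hab]
    have hexp : (a * X 0 + b * X 1) ^ 3 =
        a ^ 3 * (X 0 ^ 3) + (3 * a ^ 2 * b * X 0 + 3 * a * b ^ 2 * X 1) * (X 0 * X 1)
          + (b ^ 3 * X 1) * (X 1 ^ 2) := by ring
    rw [hexp]
    refine add_mem (add_mem (Ideal.mul_mem_left _ _ (X0_cube_mem h3))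
      (Ideal.mul_mem_left _ _ (Ideal.subset_span (by simp [J2])))) ?_
    exact Ideal.mul_mem_left _ _ (Ideal.subset_span (by simp [J2]))
  have hnil : IsNilpotent (Ideal.Quotient.mk (J2 k) (s - C c)) :=
    ⟨3, by rw [← map_pow, Ideal.Quotient.eq_zero_iff_mem]; exact hcube⟩
  have hu : IsUnit (Ideal.Quotient.mk (J2 k) (C c)) :=
    ((isUnit_iff_ne_zero.mpr hs).map (C : k →+* MvPolynomial (Fin 2) k)).map
      (Ideal.Quotient.mk (J2 k))
  have hdecomp : Ideal.Quotient.mk (J2 k) s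
      = Ideal.Quotient.mk (J2 k) (s - C c) + Ideal.Quotient.mk (J2 k) (C c) := by
    rw [← (Ideal.Quotient.mk (J2 k)).map_add]; congr 1; ring
  rw [hdecomp]
  exact hnil.isUnit_add_right_of_commute hu (Commute.all _ _)


open Polynomial in
lemma linIndep_pows {k : Type} [Field k] :
    LinearIndependent k
      (fun i : Fin 3 => (AdjoinRoot.root (Polynomial.X ^ 3 : k[X])) ^ (i : ℕ)) := by
  have hmonic : (Polynomial.X ^ 3 : k[X]).Monic := Polynomial.monic_X_pow 3
  set pb := AdjoinRoot.powerBasis' hmonic with hpb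
  have hdim : pb.dim = 3 := by simp [hpb]
  have li := pb.basis.linearIndependent
  have li2 := li.comp (finCongr hdim.symm) (finCongr hdim.symm).injective
  have hfn : (⇑pb.basis ∘ ⇑(finCongr hdim.symm))
      = fun i : Fin 3 => (AdjoinRoot.root (Polynomial.X ^ 3 : k[X])) ^ (i : ℕ) := by
    funext i
    simp [Function.comp, pb.basis_eq_pow, hpb]
  rwa [hfn] at li2

open Polynomial in
lemma finrank_adjoinRoot {k : Type} [Field k] :
    Module.finrank k (AdjoinRoot (Polynomial.X ^ 3 : k[X])) = 3 := by
  have hmonic : (Polynomial.X ^ 3 : k[X]).Monic := Polynomial.monic_X_pow 3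
  rw [(AdjoinRoot.powerBasis' hmonic).finrank]
  simp

open Polynomial in
lemma finrank_quot (h2 : (2 : k) ≠ 0) (h3 : (3 : k) ≠ 0) :
    Module.finrank k (MvPolynomial (Fin 2) k ⧸ J2 k) = 3 := by
  classical
  set A := AdjoinRoot (Polynomial.X ^ 3 : k[X]) with hA
  set r : A := AdjoinRoot.root _ with hr
  have hr3 : r ^ 3 = 0 := root_pow_three
  have hr4 : r ^ 4 = 0 := by rw [show 4 = 3 + 1 from rfl, pow_succ, hr3, zero_mul]
  set t : k := -(3 * 2⁻¹) with ht
  set F : MvPolynomial (Fin 2) k →ₐ[k] A := aeval ![r, algebraMap k A t * r ^ 2] with hF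
  have hF0 : F (X 0) = r := by simp [hF]
  have hF1 : F (X 1) = algebraMap k A t * r ^ 2 := by simp [hF]
  have htk : (2 : k) * t + 3 = 0 := by rw [ht]; field_simp; ring
  have hg1 : F (X 1 ^ 2) = 0 := by
    rw [map_pow, hF1, mul_pow, ← pow_mul, show 2 * 2 = 4 from rfl, hr4, mul_zero]
  have hg2 : F (X 0 * X 1) = 0 := by
    rw [map_mul, hF0, hF1,
      show r * (algebraMap k A t * r ^ 2) = algebraMap k A t * r ^ 3 by ring, hr3, mul_zero]
  have hg3 : F (2 * X 1 + 3 * X 0 ^ 2) = 0 := by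
    rw [map_add, map_mul, map_mul, map_pow, hF0, hF1, map_ofNat, map_ofNat]
    have : (2 : A) * (algebraMap k A t * r ^ 2) + 3 * r ^ 2
        = algebraMap k A ((2 : k) * t + 3) * r ^ 2 := by
      rw [map_add, map_mul, map_ofNat, map_ofNat]; ring
    rw [this, htk, map_zero, zero_mul]
  have hker : ∀ g ∈ J2 k, F g = 0 := by
    intro g hg
    have hle : J2 k ≤ RingHom.ker F.toRingHom := by
      rw [J2, Ideal.span_le]
      rintro x hx
      simp only [Set.mem_insert_iff, Set.mem_singleton_iff] at hx
      rcases hx with rfl | rfl | rfl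
      · simpa [RingHom.mem_ker] using hg1
      · simpa [RingHom.mem_ker] using hg2
      · simpa [RingHom.mem_ker] using hg3
    exact hle hg
  set Fq := Ideal.Quotient.liftₐ (J2 k) F hker with hFqdef
  have hFqmk : ∀ g, Fq (Ideal.Quotient.mk (J2 k) g) = F g := by
    intro g
    exact AlgHom.congr_fun (Ideal.Quotient.liftₐ_comp (J2 k) F hker) g
  have hGroot : (Ideal.Quotient.mk (J2 k) (X 0)) ^ 3 = 0 := by
    rw [← map_pow, Ideal.Quotient.eq_zero_iff_mem]; exact X0_cube_mem h3
  set G : A →ₐ[k] (MvPolynomial (Fin 2) k ⧸ J2 k) :=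
    AdjoinRoot.liftAlgHom _ (Algebra.ofId k _) (Ideal.Quotient.mk (J2 k) (X 0))
      (by rw [Polynomial.eval₂_X_pow]; exact hGroot) with hGdef
  have hGr : G r = Ideal.Quotient.mk (J2 k) (X 0) := by
    rw [hr, hGdef]; apply AdjoinRoot.liftAlgHom_root
  have e2 : (C ((2 : k)⁻¹) : MvPolynomial (Fin 2) k) * 2 = 1 := by
    rw [← map_ofNat (C : k →+* MvPolynomial (Fin 2) k) 2, ← map_mul, inv_mul_cancel₀ h2, map_one]
  have e3 : (MvPolynomial.C ((2 : k)⁻¹) : MvPolynomial (Fin 2) k) * 3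
      = MvPolynomial.C ((3 : k) * 2⁻¹) := by
    rw [← map_ofNat (MvPolynomial.C : k →+* MvPolynomial (Fin 2) k) 3, ← map_mul]
    congr 1; ring
  have hcomp1 : Fq.comp G = AlgHom.id k A := by
    apply AdjoinRoot.algHom_ext
    rw [AlgHom.comp_apply, AlgHom.id_apply]
    rw [hGdef, AdjoinRoot.liftAlgHom_root, hFqmk, hF0, hr]
  have hcomp2 : G.comp Fq = AlgHom.id k (MvPolynomial (Fin 2) k ⧸ J2 k) := by
    apply Ideal.Quotient.algHom_ext
    apply MvPolynomial.algHom_ext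
    intro i
    fin_cases i
    · show G (Fq (Ideal.Quotient.mk (J2 k) (X 0))) = Ideal.Quotient.mk (J2 k) (X 0)
      rw [hFqmk, hF0, hGr]
    · show G (Fq (Ideal.Quotient.mk (J2 k) (X 1))) = Ideal.Quotient.mk (J2 k) (X 1)
      rw [hFqmk, hF1, map_mul, map_pow, hGr, AlgHom.commutes]
      rw [IsScalarTower.algebraMap_apply k (MvPolynomial (Fin 2) k)
        (MvPolynomial (Fin 2) k ⧸ J2 k), Ideal.Quotient.algebraMap_eq,
        MvPolynomial.algebraMap_eq, ← map_pow, ← map_mul]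
      rw [Ideal.Quotient.eq]
      have hCt : (MvPolynomial.C t : MvPolynomial (Fin 2) k)
          = -(MvPolynomial.C ((3 : k) * 2⁻¹)) := by rw [ht, map_neg]
      refine mem_span_triple 0 0 (-(MvPolynomial.C ((2 : k)⁻¹))) ?_
      rw [hCt]
      linear_combination X 1 * e2 + X 0 ^ 2 * e3
  have hequiv := (AlgEquiv.ofAlgHom Fq G hcomp1 hcomp2).toLinearEquiv.finrank_eq
  exact hequiv.trans finrank_adjoinRoot


lemma localDim_eq (h2 : (2 : k) ≠ 0) (h3 : (3 : k) ≠ 0) : localDim (J2 k) 0 0 = 3 := by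
  classical
  set L : Type := Localization (ptCompl (0 : k) 0) with hL
  set Jm : Ideal L := (J2 k).map (algebraMap (MvPolynomial (Fin 2) k) L) with hJm
  have hψker : ∀ a ∈ J2 k, ((Ideal.Quotient.mkₐ k Jm).comp
      (IsScalarTower.toAlgHom k (MvPolynomial (Fin 2) k) L)) a = 0 := by
    intro a ha
    simp only [AlgHom.comp_apply, IsScalarTower.coe_toAlgHom', Ideal.Quotient.mkₐ_eq_mk]
    rw [Ideal.Quotient.eq_zero_iff_mem]
    exact Ideal.mem_map_of_mem _ ha
  set ψ : (MvPolynomial (Fin 2) k ⧸ J2 k) →ₐ[k] (L ⧸ Jm) :=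
    Ideal.Quotient.liftₐ (J2 k) ((Ideal.Quotient.mkₐ k Jm).comp
      (IsScalarTower.toAlgHom k (MvPolynomial (Fin 2) k) L)) hψker with hψdef
  have hψmk : ∀ g, ψ (Ideal.Quotient.mk (J2 k) g)
      = Ideal.Quotient.mk Jm (algebraMap (MvPolynomial (Fin 2) k) L g) := by
    intro g
    exact AlgHom.congr_fun (Ideal.Quotient.liftₐ_comp _ _ hψker) g
  have hunit : ∀ s : ptCompl (0 : k) 0,
      IsUnit (Ideal.Quotient.mk (J2 k) (s : MvPolynomial (Fin 2) k)) :=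
    fun s => isUnit_mk_of_eval_ne h3 s.2
  set φ : L →+* (MvPolynomial (Fin 2) k ⧸ J2 k) :=
    IsLocalization.lift (M := ptCompl (0 : k) 0) (S := L) hunit with hφdef
  have hφalg : ∀ g, φ (algebraMap (MvPolynomial (Fin 2) k) L g) = Ideal.Quotient.mk (J2 k) g :=
    fun g => IsLocalization.lift_eq hunit g
  have hφker : ∀ a ∈ Jm, φ a = 0 := by
    intro a ha
    have hle : Jm ≤ RingHom.ker φ := by
      rw [hJm, Ideal.map_le_iff_le_comap]
      intro x hx
      simp only [Ideal.mem_comap, RingHom.mem_ker]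
      rw [hφalg]
      exact Ideal.Quotient.eq_zero_iff_mem.mpr hx
    exact hle ha
  set φq : (L ⧸ Jm) →+* (MvPolynomial (Fin 2) k ⧸ J2 k) :=
    Ideal.Quotient.lift Jm φ hφker with hφqdef
  have hleft : ∀ x, φq (ψ x) = x := by
    intro x
    obtain ⟨g, rfl⟩ := Ideal.Quotient.mk_surjective x
    rw [hψmk, hφqdef, Ideal.Quotient.lift_mk, hφalg]
  have hinj : Function.Injective ψ := Function.LeftInverse.injective hleft
  have hsurj : Function.Surjective ψ := by
    intro tq
    obtain ⟨l, rfl⟩ := Ideal.Quotient.mk_surjective tq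
    induction l using Localization.induction_on with
    | _ y =>
      obtain ⟨rr, s⟩ := y
      obtain ⟨v, hv⟩ := (hunit s).exists_right_inv
      refine ⟨Ideal.Quotient.mk (J2 k) rr * v, ?_⟩
      obtain ⟨u, hu⟩ := (hunit s).map ψ
      refine (Units.mul_left_inj u).mp ?_
      rw [hu, ← map_mul ψ, show Ideal.Quotient.mk (J2 k) rr * v * Ideal.Quotient.mk (J2 k) (s : MvPolynomial (Fin 2) k)
        = Ideal.Quotient.mk (J2 k) rr * (Ideal.Quotient.mk (J2 k) (s : MvPolynomial (Fin 2) k) * v) by ring,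
        hv, mul_one, hψmk, hψmk]
      have hmkspec : (Localization.mk rr s : L) * algebraMap (MvPolynomial (Fin 2) k) L (s : MvPolynomial (Fin 2) k)
          = algebraMap (MvPolynomial (Fin 2) k) L rr := by
        rw [Localization.mk_eq_mk']
        exact IsLocalization.mk'_spec L rr s
      rw [← map_mul (Ideal.Quotient.mk Jm), hmkspec]
  have heq := (AlgEquiv.ofBijective ψ ⟨hinj, hsurj⟩).toLinearEquiv.finrank_eq
  show Module.finrank k (L ⧸ Jm) = 3
  rw [← heq]
  exact finrank_quot h2 h3


set_option maxHeartbeats 1000000 in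
open Polynomial in
lemma part3 (h2 : (2 : k) ≠ 0) (h3 : (3 : k) ≠ 0)
    (I : Ideal (MvPolynomial (Fin 3) k))
    (hI : I = Ideal.span {2 * X 2 ^ 2, X 1 * X 2,
      2 * X 0 * X 2 + 3 * (X 1 : MvPolynomial (Fin 3) k) ^ 2})
    (n : ℕ) (hn : 3 ≤ n) : Module.finrank k (gradedPiece I n) = 3 := by
  classical
  set A := AdjoinRoot (Polynomial.X ^ 3 : k[X]) with hA
  set r : A := AdjoinRoot.root _ with hr
  have hr3 : r ^ 3 = 0 := root_pow_three
  have hr4 : r ^ 4 = 0 := by rw [show 4 = 3 + 1 from rfl, pow_succ, hr3, zero_mul]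
  set t : k := -(3 * 2⁻¹) with ht
  have hC2 : (MvPolynomial.C (2 : k) : MvPolynomial (Fin 3) k) = 2 :=
    map_ofNat (MvPolynomial.C : k →+* MvPolynomial (Fin 3) k) 2
  have hC3 : (MvPolynomial.C (3 : k) : MvPolynomial (Fin 3) k) = 3 :=
    map_ofNat (MvPolynomial.C : k →+* MvPolynomial (Fin 3) k) 3
  have hz2 : (X 2 : MvPolynomial (Fin 3) k) ^ 2 ∈ I := by
    have h1 : (2 : MvPolynomial (Fin 3) k) * X 2 ^ 2 ∈ I := by
      rw [hI]; exact Ideal.subset_span (by simp)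
    have key : (MvPolynomial.C ((2 : k)⁻¹) : MvPolynomial (Fin 3) k) * (2 * X 2 ^ 2)
        = X 2 ^ 2 := by
      rw [← hC2, ← mul_assoc, ← map_mul, inv_mul_cancel₀ h2, map_one, one_mul]
    exact key ▸ Ideal.mul_mem_left _ _ h1
  have hyz : (X 1 : MvPolynomial (Fin 3) k) * X 2 ∈ I := by
    rw [hI]; exact Ideal.subset_span (by simp)
  have hy3 : (X 1 : MvPolynomial (Fin 3) k) ^ 3 ∈ I := by
    have h1 : (3 : MvPolynomial (Fin 3) k) * X 1 ^ 3 ∈ I := by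
      rw [hI]
      exact mem_span_triple 0 (-2 * X 0) (X 1) (by ring)
    have key : (MvPolynomial.C ((3 : k)⁻¹) : MvPolynomial (Fin 3) k) * (3 * X 1 ^ 3)
        = X 1 ^ 3 := by
      rw [← hC3, ← mul_assoc, ← map_mul, inv_mul_cancel₀ h3, map_one, one_mul]
    exact key ▸ Ideal.mul_mem_left _ _ h1
  set v : Fin 3 → (MvPolynomial (Fin 3) k ⧸ I) := fun i =>
    Ideal.Quotient.mkₐ k I (X 0 ^ (n - (i : ℕ)) * X 1 ^ (i : ℕ)) with hv
  set F : MvPolynomial (Fin 3) k →ₐ[k] A := aeval ![1, r, algebraMap k A t * r ^ 2] with hF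
  have hF0 : F (X 0) = 1 := by simp [hF]
  have hF1 : F (X 1) = r := by simp [hF]
  have hF2 : F (X 2) = algebraMap k A t * r ^ 2 := by simp [hF]
  have htk : (2 : k) * t + 3 = 0 := by rw [ht]; field_simp; ring
  have hg1' : F (2 * X 2 ^ 2) = 0 := by
    rw [map_mul, map_pow, hF2, map_ofNat, mul_pow, ← pow_mul, show 2 * 2 = 4 from rfl, hr4]
    ring
  have hg2' : F (X 1 * X 2) = 0 := by
    rw [map_mul, hF1, hF2,
      show r * (algebraMap k A t * r ^ 2) = algebraMap k A t * r ^ 3 by ring, hr3, mul_zero]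
  have hg3' : F (2 * X 0 * X 2 + 3 * X 1 ^ 2) = 0 := by
    rw [map_add, map_mul, map_mul, map_mul, map_pow, hF0, hF1, hF2, map_ofNat, map_ofNat]
    have : (2 : A) * 1 * (algebraMap k A t * r ^ 2) + 3 * r ^ 2
        = algebraMap k A ((2 : k) * t + 3) * r ^ 2 := by
      rw [map_add, map_mul, map_ofNat, map_ofNat]; ring
    rw [this, htk, map_zero, zero_mul]
  have hker : ∀ g ∈ I, F g = 0 := by
    intro g hg
    have hle : I ≤ RingHom.ker F.toRingHom := by
      rw [hI, Ideal.span_le]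
      rintro x hx
      simp only [Set.mem_insert_iff, Set.mem_singleton_iff] at hx
      rcases hx with rfl | rfl | rfl
      · simpa [RingHom.mem_ker] using hg1'
      · simpa [RingHom.mem_ker] using hg2'
      · simpa [RingHom.mem_ker] using hg3'
    exact hle hg
  set Fq := Ideal.Quotient.liftₐ I F hker with hFqdef
  have hFqmk : ∀ g, Fq (Ideal.Quotient.mk I g) = F g := fun g =>
    AlgHom.congr_fun (Ideal.Quotient.liftₐ_comp I F hker) g
  have hFqv : ∀ i : Fin 3, Fq (v i) = r ^ (i : ℕ) := by
    intro i
    show Fq (Ideal.Quotient.mk I (X 0 ^ (n - (i : ℕ)) * X 1 ^ (i : ℕ))) = r ^ (i : ℕ)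
    rw [hFqmk, map_mul, map_pow, map_pow, hF0, hF1, one_pow, one_mul]
  have hli : LinearIndependent k v := by
    apply LinearIndependent.of_comp Fq.toLinearMap
    have hfn : ⇑Fq.toLinearMap ∘ v = fun i : Fin 3 => r ^ (i : ℕ) := by
      funext i
      simp only [Function.comp_apply, AlgHom.toLinearMap_apply]
      exact hFqv i
    rw [hfn]
    exact linIndep_pows
  have key : ∀ m : Fin 3 →₀ ℕ, m 0 + m 1 + m 2 = n →
      Ideal.Quotient.mkₐ k I (X 0 ^ m 0 * X 1 ^ m 1 * X 2 ^ m 2)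
        ∈ Submodule.span k (Set.range v) := by
    intro m hdeg
    by_cases hc0 : m 2 = 0
    · by_cases hb3 : m 1 ≤ 2
      · apply Submodule.subset_span
        refine ⟨⟨m 1, by omega⟩, ?_⟩
        show Ideal.Quotient.mkₐ k I (X 0 ^ (n - m 1) * X 1 ^ m 1) = _
        rw [hc0, pow_zero, mul_one, show m 0 = n - m 1 from by omega]
      · have hrw : (X 0 : MvPolynomial (Fin 3) k) ^ m 0 * X 1 ^ m 1 * X 2 ^ m 2
            = (X 0 ^ m 0 * X 1 ^ (m 1 - 3)) * X 1 ^ 3 := by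
          rw [hc0, pow_zero, mul_one, mul_assoc, ← pow_add, Nat.sub_add_cancel (by omega)]
        rw [hrw]
        have h0 : Ideal.Quotient.mkₐ k I ((X 0 ^ m 0 * X 1 ^ (m 1 - 3)) * X 1 ^ 3) = 0 := by
          rw [Ideal.Quotient.mkₐ_eq_mk, Ideal.Quotient.eq_zero_iff_mem]
          exact Ideal.mul_mem_left _ _ hy3
        rw [h0]; exact Submodule.zero_mem _
    · by_cases hc1 : m 2 = 1
      · by_cases hb0 : m 1 = 0
        · have e2' : (MvPolynomial.C ((2 : k)⁻¹) : MvPolynomial (Fin 3) k) * 2 = 1 := by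
            rw [← hC2, ← map_mul, inv_mul_cancel₀ h2, map_one]
          have e3' : (MvPolynomial.C ((2 : k)⁻¹) : MvPolynomial (Fin 3) k) * 3
              = MvPolynomial.C ((3 : k) * 2⁻¹) := by
            rw [← hC3, ← map_mul]; congr 1; ring
          have hCt : (MvPolynomial.C t : MvPolynomial (Fin 3) k)
              = -(MvPolynomial.C ((3 : k) * 2⁻¹)) := by rw [ht, map_neg]
          have hrel : (X 0 : MvPolynomial (Fin 3) k) ^ (n - 1) * X 2 ^ 1
              - MvPolynomial.C t * (X 0 ^ (n - 2) * X 1 ^ 2) ∈ I := by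
            rw [hI]
            refine mem_span_triple 0 0 (MvPolynomial.C ((2 : k)⁻¹) * X 0 ^ (n - 2)) ?_
            have hsplit : (X 0 : MvPolynomial (Fin 3) k) ^ (n - 1) = X 0 ^ (n - 2) * X 0 := by
              rw [← pow_succ]; congr 1; omega
            rw [hCt, hsplit]
            linear_combination (-(X 0 ^ (n - 2) * X 0 * X 2)) * e2'
              + (-(X 0 ^ (n - 2) * X 1 ^ 2)) * e3'
          have hmk : Ideal.Quotient.mkₐ k I (X 0 ^ m 0 * X 1 ^ m 1 * X 2 ^ m 2) = t • v 2 := by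
            show Ideal.Quotient.mkₐ k I (X 0 ^ m 0 * X 1 ^ m 1 * X 2 ^ m 2)
              = t • Ideal.Quotient.mkₐ k I (X 0 ^ (n - 2) * X 1 ^ 2)
            rw [← map_smul, hb0, pow_zero, mul_one, hc1, show m 0 = n - 1 from by omega]
            show Ideal.Quotient.mk I (X 0 ^ (n - 1) * X 2 ^ 1)
              = Ideal.Quotient.mk I (t • (X 0 ^ (n - 2) * X 1 ^ 2))
            rw [Ideal.Quotient.eq, MvPolynomial.smul_eq_C_mul]
            exact hrel
          rw [hmk]
          exact Submodule.smul_mem _ _ (Submodule.subset_span ⟨2, rfl⟩)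
        · have hrw : (X 0 : MvPolynomial (Fin 3) k) ^ m 0 * X 1 ^ m 1 * X 2 ^ m 2
              = (X 0 ^ m 0 * X 1 ^ (m 1 - 1)) * (X 1 * X 2) := by
            rw [hc1, pow_one]
            conv_lhs => rw [show m 1 = (m 1 - 1) + 1 from by omega]
            rw [pow_succ]; ring
          rw [hrw]
          have h0 : Ideal.Quotient.mkₐ k I ((X 0 ^ m 0 * X 1 ^ (m 1 - 1)) * (X 1 * X 2)) = 0 := by
            rw [Ideal.Quotient.mkₐ_eq_mk, Ideal.Quotient.eq_zero_iff_mem]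
            exact Ideal.mul_mem_left _ _ hyz
          rw [h0]; exact Submodule.zero_mem _
      · have hrw : (X 0 : MvPolynomial (Fin 3) k) ^ m 0 * X 1 ^ m 1 * X 2 ^ m 2
            = (X 0 ^ m 0 * X 1 ^ m 1 * X 2 ^ (m 2 - 2)) * X 2 ^ 2 := by
          conv_lhs => rw [show m 2 = (m 2 - 2) + 2 from by omega]
          rw [pow_add]; ring
        rw [hrw]
        have h0 : Ideal.Quotient.mkₐ k I
            ((X 0 ^ m 0 * X 1 ^ m 1 * X 2 ^ (m 2 - 2)) * X 2 ^ 2) = 0 := by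
          rw [Ideal.Quotient.mkₐ_eq_mk, Ideal.Quotient.eq_zero_iff_mem]
          exact Ideal.mul_mem_left _ _ hz2
        rw [h0]; exact Submodule.zero_mem _
  have hspan : gradedPiece I n = Submodule.span k (Set.range v) := by
    apply le_antisymm
    · rintro x hx
      obtain ⟨f, hf, rfl⟩ := hx
      simp only [AlgHom.toLinearMap_apply]
      have hf' : MvPolynomial.IsHomogeneous f n := hf
      have hsum : (Ideal.Quotient.mkₐ k I) f
          = ∑ m ∈ f.support, coeff m f • (Ideal.Quotient.mkₐ k I) (monomial m 1) := by
        conv_lhs => rw [← support_sum_monomial_coeff f]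
        rw [map_sum]
        refine Finset.sum_congr rfl fun m hm => ?_
        rw [← map_smul, MvPolynomial.smul_monomial, smul_eq_mul, mul_one]
      rw [hsum]
      refine Submodule.sum_mem _ fun m hm => Submodule.smul_mem _ _ ?_
      have hdeg : m 0 + m 1 + m 2 = n := by
        have h := hf' (mem_support_iff.mp hm)
        simpa [Finsupp.weight_apply, Finsupp.sum_fintype, Fin.sum_univ_three] using h
      have hmono : (monomial m (1 : k) : MvPolynomial (Fin 3) k)
          = X 0 ^ m 0 * X 1 ^ m 1 * X 2 ^ m 2 := by
        rw [MvPolynomial.monomial_eq, MvPolynomial.C_1, one_mul,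
          Finsupp.prod_fintype _ _ (fun i => pow_zero _), Fin.prod_univ_three]
      rw [hmono]
      exact key m hdeg
    · rw [Submodule.span_le]
      rintro x ⟨i, rfl⟩
      refine ⟨X 0 ^ (n - (i : ℕ)) * X 1 ^ (i : ℕ), ?_, rfl⟩
      have hhom := ((isHomogeneous_X k (0 : Fin 3)).pow (n - (i : ℕ))).mul
        ((isHomogeneous_X k (1 : Fin 3)).pow (i : ℕ))
      have he : 1 * (n - (i : ℕ)) + 1 * (i : ℕ) = n := by
        have : (i : ℕ) ≤ n := le_trans (le_of_lt i.isLt) hn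
        omega
      rwa [he] at hhom
  rw [hspan, finrank_span_eq_card hli]
  simp

end Statement13Aux

/-- Let `I = ⟨2z², yz, 2xz + 3y²⟩ ⊆ k[x,y,z]` (the Bourbaki ideal of the
nodal cubic `y²z - x³ - x²z`), with `char k ≠ 2, 3`.  Then `V(I) = {(1:0:0)}`, the local
dimension in the chart `x = 1` is
`dim_k (k[y,z]/⟨z², yz, 2z + 3y²⟩)_{⟨y,z⟩} = 3` (here `y = X 0`, `z = X 1`), and consequently
`deg(R/I) = 3`. -/
theorem statement_13 {k : Type} [Field k] (h2 : (2 : k) ≠ 0) (h3 : (3 : k) ≠ 0)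
    (I : Ideal (MvPolynomial (Fin 3) k))
    (hI : I = Ideal.span {2 * X 2 ^ 2, X 1 * X 2,
      2 * X 0 * X 2 + 3 * (X 1 : MvPolynomial (Fin 3) k) ^ 2}) :
    (∀ p : Fin 3 → k, p ≠ 0 →
       ((∀ f ∈ I, eval p f = 0) ↔ ∃ c : k, c ≠ 0 ∧ p = c • ![1, 0, 0])) ∧
    localDim (Ideal.span {(X 1 : MvPolynomial (Fin 2) k) ^ 2, X 0 * X 1,
      2 * X 1 + 3 * (X 0 : MvPolynomial (Fin 2) k) ^ 2}) 0 0 = 3 ∧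
    (∃ N : ℕ, ∀ n ≥ N, Module.finrank k (gradedPiece I n) = 3) := by
  refine ⟨?_, Statement13Aux.localDim_eq h2 h3, ⟨3, fun n hn => Statement13Aux.part3 h2 h3 I hI n hn⟩⟩
  intro p hp
  constructor
  · intro hall
    have hmem1 : (2 * X 2 ^ 2 : MvPolynomial (Fin 3) k) ∈ I := by
      rw [hI]; exact Ideal.subset_span (by simp)
    have hmem2 : (X 1 * X 2 : MvPolynomial (Fin 3) k) ∈ I := by
      rw [hI]; exact Ideal.subset_span (by simp)
    have hmem3 : (2 * X 0 * X 2 + 3 * X 1 ^ 2 : MvPolynomial (Fin 3) k) ∈ I := by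
      rw [hI]; exact Ideal.subset_span (by simp)
    have e1 := hall _ hmem1
    have e3 := hall _ hmem3
    simp only [map_mul, map_add, map_pow, map_ofNat, eval_X] at e1 e3
    have hp2 : p 2 = 0 := by
      rcases mul_eq_zero.mp e1 with h | h
      · exact absurd h h2
      · exact pow_eq_zero_iff (two_ne_zero) |>.mp h
    have hp1 : p 1 = 0 := by
      rw [hp2, mul_zero, zero_add] at e3
      rcases mul_eq_zero.mp e3 with h | h
      · exact absurd h h3
      · exact pow_eq_zero_iff (two_ne_zero) |>.mp h
    refine ⟨p 0, ?_, ?_⟩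
    · intro h0
      apply hp
      funext i
      fin_cases i <;> simp [h0, hp1, hp2]
    · funext i
      fin_cases i <;> simp [hp1, hp2]
  · rintro ⟨c, hc, rfl⟩ f hf
    rw [hI] at hf
    have hle : Ideal.span {2 * X 2 ^ 2, X 1 * X 2,
        2 * X 0 * X 2 + 3 * (X 1 : MvPolynomial (Fin 3) k) ^ 2}
        ≤ RingHom.ker (eval (c • ![1, 0, 0]) : MvPolynomial (Fin 3) k →+* k) := by
      rw [Ideal.span_le]
      rintro g hg
      simp only [Set.mem_insert_iff, Set.mem_singleton_iff] at hg
      rcases hg with rfl | rfl | rfl <;>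
        simp [RingHom.mem_ker]
    simpa [RingHom.mem_ker] using hle hf
end

section
/- Let F = x^{2a+1} + x^a y^{a+1} + y^{2a} z with a ≥ 2, over a field k of characteristic 0. Then θ_1 = (0, -y^a, (a+1)x^a + 2a y^{a-1} z) and θ_2 = (-(a+1)² y^a, (a+1)(2a+1) x^a - 2a(2a+1) y^{a-1} z, a(a+1)² x^{a-1} y + 4a²(2a+1) y^{a-2} z²) are syzygies of the Jacobian ideal J_F, i.e., θ_i · (F_x, F_y, F_z) = 0 for i = 1, 2. -/
open MvPolynomial

/-- Let `F = x^{2a+1} + xᵃ y^{a+1} + y^{2a} z` with `a ≥ 2` over a field of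
characteristic `0`, with partials `F_x = (2a+1)x^{2a} + a x^{a-1} y^{a+1}`,
`F_y = (a+1)xᵃ yᵃ + 2a y^{2a-1} z`, `F_z = y^{2a}`.  Then
`θ₁ = (0, -yᵃ, (a+1)xᵃ + 2a y^{a-1} z)` and
`θ₂ = (-(a+1)² yᵃ, (a+1)(2a+1) xᵃ - 2a(2a+1) y^{a-1} z, a(a+1)² x^{a-1} y + 4a²(2a+1) y^{a-2} z²)`
are syzygies of the Jacobian ideal: `θᵢ · (F_x, F_y, F_z) = 0` for `i = 1, 2`.
(Here `x = X 0`, `y = X 1`, `z = X 2`.) -/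
theorem statement_16 {k : Type} [Field k] [CharZero k] (a : ℕ) (ha : 2 ≤ a) :
    let x : MvPolynomial (Fin 3) k := X 0
    let y : MvPolynomial (Fin 3) k := X 1
    let z : MvPolynomial (Fin 3) k := X 2
    let A : MvPolynomial (Fin 3) k := (a : MvPolynomial (Fin 3) k)
    let Fx := (2 * A + 1) * x ^ (2 * a) + A * x ^ (a - 1) * y ^ (a + 1)
    let Fy := (A + 1) * x ^ a * y ^ a + 2 * A * y ^ (2 * a - 1) * z
    let Fz := y ^ (2 * a)
    (0 * Fx + (-(y ^ a)) * Fy + ((A + 1) * x ^ a + 2 * A * y ^ (a - 1) * z) * Fz = 0) ∧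
    ((-((A + 1) ^ 2 * y ^ a)) * Fx +
      ((A + 1) * (2 * A + 1) * x ^ a - 2 * A * (2 * A + 1) * y ^ (a - 1) * z) * Fy +
      (A * (A + 1) ^ 2 * x ^ (a - 1) * y + 4 * A ^ 2 * (2 * A + 1) * y ^ (a - 2) * z ^ 2) * Fz
        = 0) := by
  obtain ⟨b, rfl⟩ : ∃ b, a = b + 2 := ⟨a - 2, (Nat.sub_add_cancel ha).symm⟩
  intro x y z A Fx Fy Fz
  simp only [Fx, Fy, Fz, A, show b + 2 - 1 = b + 1 from rfl,
    show b + 2 - 2 = b from rfl, show 2 * (b + 2) - 1 = 2 * b + 3 by omega,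
    show 2 * (b + 2) = 2 * b + 4 by ring, show b + 2 + 1 = b + 3 from rfl]
  push_cast
  constructor <;> ring
end

section
/- Let F = x^{2a+1} + x^a y^{a+1} + y^{2a} z, a ≥ 2, char(k) = 0, with θ_1, θ_2 as above. The determinant of the 3×3 matrix with rows θ_1, θ_2, (x, y, z) is a nonzero constant multiple of F; hence (by Saito's criterion) F is a free curve. -/
open MvPolynomial
set_option maxHeartbeats 1000000

/-- Let `F = x^{2a+1} + xᵃ y^{a+1} + y^{2a} z`, `a ≥ 2`, `char k = 0`, with
`θ₁ = (0, -yᵃ, (a+1)xᵃ + 2a y^{a-1} z)` and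
`θ₂ = (-(a+1)² yᵃ, (a+1)(2a+1) xᵃ - 2a(2a+1) y^{a-1} z, a(a+1)² x^{a-1} y + 4a²(2a+1) y^{a-2} z²)`.
The determinant of the `3×3` matrix with rows `θ₁`, `θ₂`, `(x,y,z)` is a nonzero constant
multiple of `F` (hence, by Saito's criterion, `F` is a free curve).
(Here `x = X 0`, `y = X 1`, `z = X 2`.) -/
theorem statement_17 {k : Type} [Field k] [CharZero k] (a : ℕ) (ha : 2 ≤ a) :
    let x : MvPolynomial (Fin 3) k := X 0
    let y : MvPolynomial (Fin 3) k := X 1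
    let z : MvPolynomial (Fin 3) k := X 2
    let A : MvPolynomial (Fin 3) k := (a : MvPolynomial (Fin 3) k)
    let F := x ^ (2 * a + 1) + x ^ a * y ^ (a + 1) + y ^ (2 * a) * z
    ∃ c : k, c ≠ 0 ∧
      Matrix.det
        !![0, -(y ^ a), (A + 1) * x ^ a + 2 * A * y ^ (a - 1) * z;
           -((A + 1) ^ 2 * y ^ a),
             (A + 1) * (2 * A + 1) * x ^ a - 2 * A * (2 * A + 1) * y ^ (a - 1) * z,
             A * (A + 1) ^ 2 * x ^ (a - 1) * y + 4 * A ^ 2 * (2 * A + 1) * y ^ (a - 2) * z ^ 2;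
           x, y, z] = C c * F := by
  intro x y z A F
  obtain ⟨b, rfl⟩ : ∃ b, a = b + 2 := ⟨a - 2, by omega⟩
  refine ⟨-((((b + 3) ^ 2 * (2 * b + 5) : ℕ) : k)), ?_, ?_⟩
  · exact neg_ne_zero.mpr (Nat.cast_ne_zero.mpr (by positivity))
  · show _ = _
    rw [Matrix.det_fin_three]
    simp only [Matrix.of_apply, Matrix.cons_val', Matrix.cons_val_zero, Matrix.cons_val_one,
      Matrix.head_cons, Matrix.empty_val', Matrix.cons_val_fin_one, Matrix.head_fin_const,
      Matrix.cons_val_two, Matrix.tail_cons]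
    show _ = C _ * (x ^ (2 * (b + 2) + 1) + x ^ (b + 2) * y ^ ((b + 2) + 1) + y ^ (2 * (b + 2)) * z)
    have h1 : b + 2 - 1 = b + 1 := by omega
    have h2 : b + 2 - 2 = b := by omega
    rw [h1, h2, map_neg, map_natCast]
    have hA : A = (b : MvPolynomial (Fin 3) k) + 2 := by
      show ((b + 2 : ℕ) : MvPolynomial (Fin 3) k) = _
      push_cast
      ring
    have hc : (((b + 3) ^ 2 * (2 * b + 5) : ℕ) : MvPolynomial (Fin 3) k)
        = ((b : MvPolynomial (Fin 3) k) + 3) ^ 2 * (2 * (b : MvPolynomial (Fin 3) k) + 5) := by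
      push_cast
      ring
    rw [hA, hc]
    ring
end
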